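/- Let (X, D) be a metric space, μ : X → ℝ a 1-Lipschitz function, and x* ∈ X with μ(x*) ≥ μ(x) for all x ∈ X. Let A ⊆ X be a finite nonempty set, ε > 0, and μ̂ : A → ℝ an estimate satisfying |μ̂(x) − μ(x)| ≤ ε for all x ∈ A. If x** ∈ A satisfies D(x*, x**) ≤ ε, then μ̂(x**) ≥ max_{x ∈ A} μ̂(x) − 3ε; in particular, x** is not removed by the elimination rule that discards points whose estimate is more than 3ε below the best estimate, so the optimal arm remains covered by the surviving region ⋃_{x ∈ A⁺} B(x, ε), where A⁺ = {x ∈ A : μ̂(x) ≥ max_{y∈A} μ̂(y) − 3ε}. -/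
import Mathlib


open Metric Set

/-- Under the clean event, if `x** ∈ A` is within distance `ε` of
the optimal arm `x*`, then `μ̂(x**) ≥ max_{x∈A} μ̂(x) − 3ε`, so `x**` survives
the elimination rule with threshold `3ε` and the optimal arm remains covered by
the surviving region `⋃_{x ∈ A⁺} B(x, ε)`. -/
theorem optimal_arm_not_eliminated {X : Type*} [MetricSpace X]
    (μ : X → ℝ) (hμ : LipschitzWith 1 μ)
    (xstar : X) (hmax : ∀ x, μ x ≤ μ xstar)
    (A : Finset X) (hA : A.Nonempty) (ε : ℝ) (hε : 0 < ε)
    (μhat : X → ℝ) (hest : ∀ x ∈ A, |μhat x - μ x| ≤ ε)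
    (xss : X) (hxss : xss ∈ A) (hclose : dist xstar xss ≤ ε) :
    A.sup' hA μhat - 3 * ε ≤ μhat xss ∧
    xstar ∈ ⋃ x ∈ {y ∈ (A : Set X) | A.sup' hA μhat - 3 * ε ≤ μhat y},
      Metric.closedBall x ε := by
  have key : A.sup' hA μhat - 3 * ε ≤ μhat xss := by
    have h1 : A.sup' hA μhat ≤ μ xstar + ε := by
      apply Finset.sup'_le
      intro y hy
      have := abs_le.1 (hest y hy)
      linarith [hmax y, this.1]
    have h2 : μ xstar ≤ μ xss + ε := by
      have hd := hμ.dist_le_mul xstar xss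
      rw [NNReal.coe_one, one_mul] at hd
      have := le_trans (le_abs_self (μ xstar - μ xss))
        (le_trans (Real.dist_eq (μ xstar) (μ xss) ▸ hd) hclose)
      linarith
    have h3 := abs_le.1 (hest xss hxss)
    linarith [h3.2]
  refine ⟨key, ?_⟩
  refine mem_iUnion₂.2 ⟨xss, ⟨hxss, key⟩, ?_⟩
  simpa [dist_comm] using hclose
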